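/- Let d ≥ 3 be odd, q a nonzero element of a field K, and θ*_0,...,θ*_d pairwise distinct elements of K such that whenever 0 ≤ i < j ≤ d, 0 ≤ r < s ≤ d, i + j = r + s, and i + j is odd, one has (θ*_i - θ*_j)/(θ*_r - θ*_s) = [j-i]_q/[s-r]_q (all [n]_q appearing being nonzero for odd n ≤ d). Set m = (d-1)/2. Then ∏_{0 ≤ ℓ < k ≤ m} (θ*_{2ℓ+1} - θ*_{2k})/(θ*_{2ℓ} - θ*_{2k+1}) = ∏_{1 ≤ i ≤ d, i odd} 1/[i]_q. -/

import Mathlib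

open Finset

/-- The symmetric q-integer `[n]_q = q^{n-1} + q^{n-3} + ... + q^{1-n}`. -/
def qint {K : Type*} [Field K] (q : K) (n : ℕ) : K :=
  ∑ i ∈ Finset.range n, q ^ (n - 1 - i) * q⁻¹ ^ i

lemma qint_one {K : Type*} [Field K] (q : K) : qint q 1 = 1 := by
  simp [qint]

/-- evaluation of the product Ψ in terms of q-integers. -/
theorem stmt13 {K : Type*} [Field K] (q : K) (hq : q ≠ 0)
    (d : ℕ) (hd : 3 ≤ d) (hodd : Odd d) (θ : ℕ → K)
    (hdist : ∀ i j : ℕ, i ≤ d → j ≤ d → θ i = θ j → i = j)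
    (hqn : ∀ n : ℕ, Odd n → n ≤ d → qint q n ≠ 0)
    (hratio : ∀ i j r s : ℕ, i < j → j ≤ d → r < s → s ≤ d →
      i + j = r + s → Odd (i + j) →
      (θ i - θ j) / (θ r - θ s) = qint q (j - i) / qint q (s - r))
    (m : ℕ) (hm : m = (d - 1) / 2) :
    ∏ k ∈ Finset.range (m+1), ∏ l ∈ Finset.range k,
        (θ (2 * l + 1) - θ (2 * k)) / (θ (2 * l) - θ (2 * k + 1))
      = ∏ i ∈ (Finset.range (d+1)).filter (fun i => Odd i), (qint q i)⁻¹ := by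
  obtain ⟨n, hn⟩ := hodd
  have hmn : m = n := by omega
  subst hmn
  subst hn
  -- telescoping lemma
  have tele : ∀ k, k ≤ m →
      ∏ j ∈ Finset.range k, qint q (2 * j + 1) / qint q (2 * j + 3)
        = (qint q (2 * k + 1))⁻¹ := by
    intro k
    induction k with
    | zero => intro _; simp [qint_one]
    | succ k ih =>
      intro hk
      rw [Finset.prod_range_succ, ih (by omega)]
      have h1 : qint q (2 * k + 1) ≠ 0 :=
        hqn _ ⟨k, by ring⟩ (by omega)
      rw [div_eq_mul_inv, ← mul_assoc, inv_mul_cancel₀ h1, one_mul,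
        show 2 * (k + 1) + 1 = 2 * k + 3 from by ring]
  have hinner : ∀ k ∈ Finset.range (m + 1),
      ∏ l ∈ Finset.range k, (θ (2 * l + 1) - θ (2 * k)) / (θ (2 * l) - θ (2 * k + 1))
        = (qint q (2 * k + 1))⁻¹ := by
    intro k hk
    simp only [Finset.mem_range] at hk
    have step : ∀ l ∈ Finset.range k,
        (θ (2 * l + 1) - θ (2 * k)) / (θ (2 * l) - θ (2 * k + 1))
          = qint q (2 * (k - 1 - l) + 1) / qint q (2 * (k - 1 - l) + 3) := by
      intro l hl
      simp only [Finset.mem_range] at hl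
      have h := hratio (2 * l + 1) (2 * k) (2 * l) (2 * k + 1)
        (by omega) (by omega) (by omega) (by omega) (by omega)
        (⟨l + k, by ring⟩)
      rw [h]
      congr 2 <;> omega
    rw [Finset.prod_congr rfl step]
    rw [Finset.prod_range_reflect (fun j => qint q (2 * j + 1) / qint q (2 * j + 3)) k]
    exact tele k (by omega)
  rw [Finset.prod_congr rfl hinner]
  -- rewrite RHS as product over image
  have himg : (Finset.range (2 * m + 1 + 1)).filter (fun i => Odd i)
      = (Finset.range (m + 1)).image (fun k => 2 * k + 1) := by
    ext i
    simp only [Finset.mem_filter, Finset.mem_range, Finset.mem_image]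
    constructor
    · rintro ⟨hi, j, hj⟩
      exact ⟨j, by omega, by omega⟩
    · rintro ⟨j, hj, rfl⟩
      exact ⟨by omega, j, by omega⟩
  rw [himg, Finset.prod_image (fun a _ b _ h => by omega)]
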